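/- Let f : C → C be holomorphic and u = S ∘ f where S is the stereographic projection onto S^2. Then u satisfies the first-order equation u_x = u × u_y on C. -/

import Mathlib

open Matrix

/-- Partial derivative with respect to the first (x) variable. -/
noncomputable def pdx {E : Type*} [NormedAddCommGroup E] [NormedSpace ℝ E]
    (u : ℝ × ℝ → E) (p : ℝ × ℝ) : E := deriv (fun t => u (t, p.2)) p.1

/-- Partial derivative with respect to the second (y) variable. -/
noncomputable def pdy {E : Type*} [NormedAddCommGroup E] [NormedSpace ℝ E]
    (u : ℝ × ℝ → E) (p : ℝ × ℝ) : E := deriv (fun t => u (p.1, t)) p.2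

/-- Stereographic projection from the north pole, `S : ℂ → S² \ {N}`. -/
noncomputable def stereo (z : ℂ) : Fin 3 → ℝ :=
  ![2 * z.re / (1 + Complex.normSq z), 2 * z.im / (1 + Complex.normSq z),
    (Complex.normSq z - 1) / (Complex.normSq z + 1)]

/-- The real differential of `stereo` at `w` in direction `c`. -/
noncomputable def dS (w c : ℂ) : Fin 3 → ℝ :=
  ![(2 * c.re * (1 + Complex.normSq w) - 2 * w.re * (2 * (w.re * c.re + w.im * c.im))) /
      (1 + Complex.normSq w) ^ 2,
    (2 * c.im * (1 + Complex.normSq w) - 2 * w.im * (2 * (w.re * c.re + w.im * c.im))) /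
      (1 + Complex.normSq w) ^ 2,
    (2 * (w.re * c.re + w.im * c.im) * (Complex.normSq w + 1) -
      (Complex.normSq w - 1) * (2 * (w.re * c.re + w.im * c.im))) / (Complex.normSq w + 1) ^ 2]

lemma one_add_normSq_pos (w : ℂ) : (0:ℝ) < 1 + Complex.normSq w := by
  have := Complex.normSq_nonneg w; linarith

lemma stereo_hasDerivAt (g : ℝ → ℂ) (c : ℂ) (t : ℝ) (hg : HasDerivAt g c t) :
    HasDerivAt (fun s => stereo (g s)) (dS (g t) c) t := by
  have hre : HasDerivAt (fun s => (g s).re) c.re t := by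
    simpa [Function.comp_def] using Complex.reCLM.hasFDerivAt.comp_hasDerivAt t hg
  have him : HasDerivAt (fun s => (g s).im) c.im t := by
    simpa [Function.comp_def] using Complex.imCLM.hasFDerivAt.comp_hasDerivAt t hg
  have hn : HasDerivAt (fun s => Complex.normSq (g s))
      (2 * ((g t).re * c.re + (g t).im * c.im)) t := by
    have := (hre.mul hre).add (him.mul him)
    simp only [Complex.normSq_apply]
    exact this.congr_deriv (by ring)
  have hd0 : (1 : ℝ) + Complex.normSq (g t) ≠ 0 := (one_add_normSq_pos _).ne'
  have hd0' : Complex.normSq (g t) + 1 ≠ 0 := by rw [add_comm]; exact hd0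
  rw [hasDerivAt_pi]
  intro i
  fin_cases i
  · have h := ((hre.const_mul 2).div ((hn.const_add 1)) hd0)
    simp only [stereo, dS] at *
    exact h
  · have h := ((him.const_mul 2).div ((hn.const_add 1)) hd0)
    simp only [stereo, dS] at *
    exact h
  · have h := ((hn.sub_const 1).div ((hn.add_const 1)) hd0')
    simp only [stereo, dS] at *
    exact h

lemma stereo_cross_id (w c : ℂ) : dS w c = stereo w ⨯₃ dS w (Complex.I * c) := by
  have h1 : (1:ℝ) + Complex.normSq w ≠ 0 := (one_add_normSq_pos w).ne'
  have h2 : Complex.normSq w + 1 ≠ 0 := by rw [add_comm]; exact h1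
  funext i
  fin_cases i <;>
  · simp [dS, stereo, crossProduct, Complex.normSq_apply, Complex.mul_re, Complex.mul_im,
      Complex.I_re, Complex.I_im]
    rw [Complex.normSq_apply] at h1 h2
    field_simp
    ring

/-- If `f : ℂ → ℂ` is holomorphic and `u = S ∘ f`, then `u_x = u × u_y`. -/
theorem stmt8 (f : ℂ → ℂ) (hf : Differentiable ℂ f)
    (u : ℝ × ℝ → (Fin 3 → ℝ))
    (hu : ∀ p : ℝ × ℝ, u p = stereo (f (p.1 + p.2 * Complex.I))) :
    ∀ p, pdx u p = u p ⨯₃ pdy u p := by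
  intro p
  obtain ⟨x, y⟩ := p
  set z : ℂ := x + y * Complex.I with hz
  set c : ℂ := deriv f z with hc
  have hgx : HasDerivAt (fun s : ℝ => f (s + y * Complex.I)) c x := by
    have h1 : HasDerivAt (fun s : ℝ => (s : ℂ) + y * Complex.I) 1 x := by
      simpa using (Complex.ofRealCLM.hasDerivAt (x := x)).add_const ((y:ℂ) * Complex.I)
    have h2 := ((hf z).hasDerivAt.hasFDerivAt.restrictScalars ℝ).comp_hasDerivAt x h1
    simpa [Function.comp_def] using h2
  have hgy : HasDerivAt (fun s : ℝ => f (x + s * Complex.I)) (Complex.I * c) y := by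
    have h1 : HasDerivAt (fun s : ℝ => (x : ℂ) + s * Complex.I) Complex.I y := by
      have := ((Complex.ofRealCLM.hasDerivAt (x := y)).mul_const Complex.I).const_add (x:ℂ)
      simpa using this
    have h2 := ((hf z).hasDerivAt.hasFDerivAt.restrictScalars ℝ).comp_hasDerivAt y h1
    simpa [mul_comm, Function.comp_def] using h2
  have hx : pdx u (x, y) = dS (f z) c := by
    have := (stereo_hasDerivAt _ c x hgx).deriv
    rw [pdx]
    simp only [hu]
    simpa using this
  have hy : pdy u (x, y) = dS (f z) (Complex.I * c) := by
    have := (stereo_hasDerivAt _ (Complex.I * c) y hgy).deriv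
    rw [pdy]
    simp only [hu]
    simpa using this
  rw [hx, hy, hu, stereo_cross_id]
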